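/- Let α ≥ 1 be a natural number, let x_i, y ∈ ℝ with y ≠ x_i, and let f, Q : ℝ → ℝ be functions of class C^(α+1) on ℝ such that the iterated derivatives of f of all orders j with 0 ≤ j ≤ α − 1 vanish at x_i. Define Ψ(x) = (α + 1)·f'(x)·Q(x) − f(x)·Q'(x). Then there exists η strictly between x_i and y such that Ψ(y) = (α + 1)·f^(α)(x_i)·Q(x_i)·(y − x_i)^(α−1)/(α−1)! + Ψ^(α)(η)·(y − x_i)^α/α!. -/

import Mathlib

open Set

private lemma iDeriv_add {j : ℕ} {u v : ℝ → ℝ} (hu : ContDiff ℝ j u) (hv : ContDiff ℝ j v)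
    (x : ℝ) :
    iteratedDeriv j (fun y => u y + v y) x = iteratedDeriv j u x + iteratedDeriv j v x := by
  rw [← iteratedDerivWithin_univ, ← iteratedDerivWithin_univ, ← iteratedDerivWithin_univ]
  exact iteratedDerivWithin_add (Set.mem_univ x) uniqueDiffOn_univ
    hu.contDiffWithinAt hv.contDiffWithinAt

private lemma iDeriv_cmul {j : ℕ} {u : ℝ → ℝ} (hu : ContDiff ℝ j u) (c x : ℝ) :
    iteratedDeriv j (fun y => c * u y) x = c * iteratedDeriv j u x := by
  rw [← iteratedDerivWithin_univ, ← iteratedDerivWithin_univ]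
  exact iteratedDerivWithin_const_mul (Set.mem_univ x) uniqueDiffOn_univ c hu.contDiffWithinAt

private lemma iDeriv_sub {j : ℕ} {u v : ℝ → ℝ} (hu : ContDiff ℝ j u) (hv : ContDiff ℝ j v)
    (x : ℝ) :
    iteratedDeriv j (fun y => u y - v y) x = iteratedDeriv j u x - iteratedDeriv j v x := by
  rw [← iteratedDerivWithin_univ, ← iteratedDerivWithin_univ, ← iteratedDerivWithin_univ]
  exact iteratedDerivWithin_sub (Set.mem_univ x) uniqueDiffOn_univ
    hu.contDiffWithinAt hv.contDiffWithinAt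

/-- Key "Leibniz at a flat point" lemma: if all derivatives of `u` of order `< j` vanish
at `xi`, then the `j`-th derivative of `u * v` at `xi` is `u^(j)(xi) * v(xi)`. -/
private lemma iDeriv_mul_of_vanish (xi : ℝ) :
    ∀ (j : ℕ) (u v : ℝ → ℝ), ContDiff ℝ j u → ContDiff ℝ j v →
      (∀ k, k < j → iteratedDeriv k u xi = 0) →
      iteratedDeriv j (fun x => u x * v x) xi = iteratedDeriv j u xi * v xi := by
  intro j
  induction j with
  | zero => intro u v _ _ _; simp
  | succ j IH =>
    intro u v hu hv hvan
    have hcastu : ContDiff ℝ ((j : WithTop ℕ∞) + 1) u := by exact_mod_cast hu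
    have hcastv : ContDiff ℝ ((j : WithTop ℕ∞) + 1) v := by exact_mod_cast hv
    have hu1 : Differentiable ℝ u := (contDiff_succ_iff_deriv.mp hcastu).1
    have hv1 : Differentiable ℝ v := (contDiff_succ_iff_deriv.mp hcastv).1
    have hu' : ContDiff ℝ j (deriv u) := (contDiff_succ_iff_deriv.mp hcastu).2.2
    have hv' : ContDiff ℝ j (deriv v) := (contDiff_succ_iff_deriv.mp hcastv).2.2
    have huj : ContDiff ℝ j u := hu.of_le (by exact_mod_cast Nat.le_succ j)
    have hvj : ContDiff ℝ j v := hv.of_le (by exact_mod_cast Nat.le_succ j)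
    have hderiv : deriv (fun x => u x * v x) = fun x => deriv u x * v x + u x * deriv v x := by
      funext x
      exact deriv_mul (hu1 x) (hv1 x)
    have h1 : iteratedDeriv j (fun x => deriv u x * v x) xi
        = iteratedDeriv j (deriv u) xi * v xi := by
      refine IH (deriv u) v hu' hvj (fun k hk => ?_)
      rw [← iteratedDeriv_succ']
      exact hvan (k + 1) (Nat.succ_lt_succ hk)
    have h2 : iteratedDeriv j (fun x => u x * deriv v x) xi
        = iteratedDeriv j u xi * deriv v xi :=
      IH u (deriv v) huj hv' (fun k hk => hvan k (hk.trans (Nat.lt_succ_self j)))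
    rw [iteratedDeriv_succ', hderiv,
      iDeriv_add (hu'.mul hvj) (huj.mul hv') xi, h1, h2,
      hvan j (Nat.lt_succ_self j), zero_mul, add_zero, ← iteratedDeriv_succ']

/-- For a globally `C^n` function, the iterated derivative within a unique-diff set agrees
with the global iterated derivative. -/
private lemma iDW_eq_iD {n : ℕ} {g : ℝ → ℝ} (hg : ContDiff ℝ n g) {s : Set ℝ}
    (hs : UniqueDiffOn ℝ s) {x : ℝ} (hx : x ∈ s) :
    iteratedDerivWithin n g s x = iteratedDeriv n g x := by
  have hg' : ContDiff ℝ (n : ℕ∞) g := by exact_mod_cast hg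
  have h := (contDiff_iff_ftaylorSeries.mp hg').hasFTaylorSeriesUpToOn s
  have heq := h.eq_iteratedFDerivWithin_of_uniqueDiffOn (m := n) (by exact_mod_cast le_rfl) hs hx
  rw [iteratedDerivWithin_eq_iteratedFDerivWithin, iteratedDeriv_eq_iteratedFDeriv, ← heq]
  rfl

/-- Global Taylor–Lagrange, forward case `x₀ < y`. -/
private lemma taylor_lagrange_lt (n : ℕ) (g : ℝ → ℝ) (hg : ContDiff ℝ (n + 1) g)
    (x₀ y : ℝ) (hxy : x₀ < y) :
    ∃ η ∈ Set.Ioo x₀ y,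
      g y = (∑ k ∈ Finset.range (n + 1),
          iteratedDeriv k g x₀ * (y - x₀) ^ k / (k.factorial : ℝ))
        + iteratedDeriv (n + 1) g η * (y - x₀) ^ (n + 1) / ((n + 1).factorial : ℝ) := by
  have hgn : ContDiff ℝ n g := hg.of_le (by exact_mod_cast Nat.le_succ n)
  have hEq : Set.EqOn (iteratedDerivWithin n g (Set.Icc x₀ y)) (iteratedDeriv n g)
      (Set.Icc x₀ y) := fun z hz => iDW_eq_iD hgn (uniqueDiffOn_Icc hxy) hz
  have hdiff : Differentiable ℝ (iteratedDeriv n g) :=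
    hg.differentiable_iteratedDeriv n (by exact_mod_cast Nat.lt_succ_self n)
  have hf' : DifferentiableOn ℝ (iteratedDerivWithin n g (Set.Icc x₀ y)) (Set.Ioo x₀ y) :=
    (hdiff.differentiableOn).congr (fun z hz => hEq (Set.Ioo_subset_Icc_self hz))
  obtain ⟨η, hη, hrem⟩ := taylor_mean_remainder_lagrange (n := n) hxy.ne
    (hgn.contDiffOn) (by rwa [Set.uIcc_of_le hxy.le, Set.uIoo_of_le hxy.le])
  rw [Set.uIoo_of_le hxy.le] at hη
  rw [Set.uIcc_of_le hxy.le] at hrem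
  refine ⟨η, hη, ?_⟩
  have hsum : taylorWithinEval g n (Set.Icc x₀ y) x₀ y
      = ∑ k ∈ Finset.range (n + 1),
          iteratedDeriv k g x₀ * (y - x₀) ^ k / (k.factorial : ℝ) := by
    rw [taylor_within_apply]
    refine Finset.sum_congr rfl (fun k hk => ?_)
    have hk' : (k : ℕ) ≤ n := Nat.lt_succ_iff.mp (Finset.mem_range.mp hk)
    have : iteratedDerivWithin k g (Set.Icc x₀ y) x₀ = iteratedDeriv k g x₀ :=
      iDW_eq_iD (hgn.of_le (by exact_mod_cast hk')) (uniqueDiffOn_Icc hxy)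
        (Set.left_mem_Icc.mpr hxy.le)
    rw [this, smul_eq_mul]
    ring
  have hrem' : iteratedDerivWithin (n + 1) g (Set.Icc x₀ y) η = iteratedDeriv (n + 1) g η :=
    iDW_eq_iD hg (uniqueDiffOn_Icc hxy) (Set.Ioo_subset_Icc_self hη)
  rw [hsum] at hrem
  rw [hrem'] at hrem
  linarith [hrem]

/-- Global Taylor–Lagrange, both sides. -/
private lemma taylor_lagrange (n : ℕ) (g : ℝ → ℝ) (hg : ContDiff ℝ (n + 1) g)
    (x₀ y : ℝ) (hxy : y ≠ x₀) :
    ∃ η ∈ Set.Ioo (min x₀ y) (max x₀ y),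
      g y = (∑ k ∈ Finset.range (n + 1),
          iteratedDeriv k g x₀ * (y - x₀) ^ k / (k.factorial : ℝ))
        + iteratedDeriv (n + 1) g η * (y - x₀) ^ (n + 1) / ((n + 1).factorial : ℝ) := by
  rcases lt_or_gt_of_ne hxy with hlt | hgt
  · -- y < x₀ : reflect
    have hneg : ContDiff ℝ (n + 1) (fun x => g (-x)) := hg.comp (contDiff_id.neg)
    obtain ⟨η', hη', heq⟩ := taylor_lagrange_lt n (fun x => g (-x)) hneg (-x₀) (-y)
      (by linarith)
    refine ⟨-η', ?_, ?_⟩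
    · rw [min_eq_right hlt.le, max_eq_left hlt.le]
      obtain ⟨h1, h2⟩ := hη'
      exact ⟨by linarith, by linarith⟩
    · have hterm : ∀ k, iteratedDeriv k (fun x => g (-x)) (-x₀) * (-y - -x₀) ^ k
          = iteratedDeriv k g x₀ * (y - x₀) ^ k := by
        intro k
        have hb : ((-1 : ℝ)) * (-y - -x₀) = y - x₀ := by ring
        rw [iteratedDeriv_comp_neg, neg_neg, smul_eq_mul]
        calc (-1 : ℝ) ^ k * iteratedDeriv k g x₀ * (-y - -x₀) ^ k
            = iteratedDeriv k g x₀ * ((-1 : ℝ) * (-y - -x₀)) ^ k := by rw [mul_pow]; ring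
          _ = iteratedDeriv k g x₀ * (y - x₀) ^ k := by rw [hb]
      have hrem : iteratedDeriv (n + 1) (fun x => g (-x)) η' * (-y - -x₀) ^ (n + 1)
          = iteratedDeriv (n + 1) g (-η') * (y - x₀) ^ (n + 1) := by
        have hb : ((-1 : ℝ)) * (-y - -x₀) = y - x₀ := by ring
        rw [iteratedDeriv_comp_neg, smul_eq_mul]
        calc (-1 : ℝ) ^ (n + 1) * iteratedDeriv (n + 1) g (-η') * (-y - -x₀) ^ (n + 1)
            = iteratedDeriv (n + 1) g (-η') * ((-1 : ℝ) * (-y - -x₀)) ^ (n + 1) := by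
              rw [mul_pow]; ring
          _ = iteratedDeriv (n + 1) g (-η') * (y - x₀) ^ (n + 1) := by rw [hb]
      have : g y = g (-(-y)) := by rw [neg_neg]
      rw [this, heq]
      congr 1
      · exact Finset.sum_congr rfl (fun k _ => by rw [hterm k])
      · rw [hrem]
  · -- x₀ < y
    obtain ⟨η, hη, heq⟩ := taylor_lagrange_lt n g hg x₀ y hgt
    exact ⟨η, by rwa [min_eq_left hgt.le, max_eq_right hgt.le], heq⟩

/-- Taylor expansion (11) of the paper for the denominator function `Ψ` of (6). -/
theorem obreshkoff_ehrlich_Psi_taylor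
    (α : ℕ) (hα : 1 ≤ α) (xi y : ℝ) (hxy : y ≠ xi) (f Q : ℝ → ℝ)
    (hf : ContDiff ℝ (α + 1) f) (hQ : ContDiff ℝ (α + 1) Q)
    (hzero : ∀ j, j ≤ α - 1 → iteratedDeriv j f xi = 0)
    (Ψ : ℝ → ℝ)
    (hΨ : Ψ = fun x => ((α : ℝ) + 1) * deriv f x * Q x - f x * deriv Q x) :
    ∃ η ∈ Set.Ioo (min xi y) (max xi y),
      Ψ y = ((α : ℝ) + 1) * iteratedDeriv α f xi * Q xi * (y - xi) ^ (α - 1)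
            / ((α - 1).factorial : ℝ)
        + iteratedDeriv α Ψ η * (y - xi) ^ α / ((α).factorial : ℝ) := by
  obtain ⟨m, rfl⟩ : ∃ m, α = m + 1 := ⟨α - 1, (Nat.succ_pred_eq_of_pos hα).symm⟩
  set α := m + 1 with hαdef
  have hsub : α - 1 = m := rfl
  -- smoothness of ingredients
  have hfc : ContDiff ℝ ((α : WithTop ℕ∞) + 1) f := by exact_mod_cast hf
  have hQc : ContDiff ℝ ((α : WithTop ℕ∞) + 1) Q := by exact_mod_cast hQ
  have hf' : ContDiff ℝ (α : ℕ) (deriv f) := by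
    exact_mod_cast (contDiff_succ_iff_deriv.mp hfc).2.2
  have hQ' : ContDiff ℝ (α : ℕ) (deriv Q) := by
    exact_mod_cast (contDiff_succ_iff_deriv.mp hQc).2.2
  have hfα : ContDiff ℝ (α : ℕ) f := hf.of_le (by exact_mod_cast Nat.le_succ α)
  have hQα : ContDiff ℝ (α : ℕ) Q := hQ.of_le (by exact_mod_cast Nat.le_succ α)
  have hΨc : ContDiff ℝ (α : ℕ) Ψ := by
    rw [hΨ]
    exact ((contDiff_const.mul hf').mul hQα).sub (hfα.mul hQ')
  -- value of the j-th derivative of Ψ at xi, for j ≤ α - 1 = m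
  have hΨj : ∀ j, j ≤ m →
      iteratedDeriv j Ψ xi = ((α : ℝ) + 1) * iteratedDeriv (j + 1) f xi * Q xi := by
    intro j hj
    have hjα : j ≤ α := hj.trans (Nat.le_succ m)
    have hf'j : ContDiff ℝ j (deriv f) := hf'.of_le (by exact_mod_cast hjα)
    have hQj : ContDiff ℝ j Q := hQα.of_le (by exact_mod_cast hjα)
    have hfj : ContDiff ℝ j f := hfα.of_le (by exact_mod_cast hjα)
    have hQ'j : ContDiff ℝ j (deriv Q) := hQ'.of_le (by exact_mod_cast hjα)
    have hbody : Ψ = fun x => ((α : ℝ) + 1) * (deriv f x * Q x) - f x * deriv Q x := by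
      rw [hΨ]; funext x; ring
    rw [hbody]
    rw [iDeriv_sub ((contDiff_const (c := ((α : ℝ) + 1))).mul (hf'j.mul hQj)) (hfj.mul hQ'j) xi,
      iDeriv_cmul (hf'j.mul hQj) _ xi,
      iDeriv_mul_of_vanish xi j (deriv f) Q hf'j hQj (fun k hk => by
        rw [← iteratedDeriv_succ']
        exact hzero (k + 1) (Nat.succ_le_of_lt (hk.trans_le hj))),
      iDeriv_mul_of_vanish xi j f (deriv Q) hfj hQ'j (fun k hk => hzero k (hk.le.trans hj)),
      hzero j hj, zero_mul, sub_zero, ← iteratedDeriv_succ']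
    ring
  -- apply Taylor with n = m
  obtain ⟨η, hη, heq⟩ := taylor_lagrange m Ψ (by exact_mod_cast hΨc) xi y hxy
  refine ⟨η, hη, ?_⟩
  rw [heq]
  congr 1
  -- the Taylor polynomial collapses to the single top term
  rw [Finset.sum_eq_single_of_mem m (Finset.self_mem_range_succ m)
    (fun k hk hkm => by
      rw [hΨj k (Nat.lt_succ_iff.mp (Finset.mem_range.mp hk))]
      have : iteratedDeriv (k + 1) f xi = 0 :=
        hzero (k + 1) (Nat.succ_le_of_lt (lt_of_le_of_ne
          (Nat.lt_succ_iff.mp (Finset.mem_range.mp hk)) hkm))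
      rw [this]
      ring)]
  rw [hΨj m le_rfl]
  rw [hsub]
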